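/- Let K be a field, n ≥ 1 an integer, and x₁, …, xₙ ∈ K with 1 − x_i ≠ 0 for all i and 1 − ∏_{i=1}^n x_i ≠ 0. Then Σ_{I ⊊ {1,…,n}} (1/(1 − ∏_{i=1}^n x_i)) · ∏_{i∈I} (x_i/(1 − x_i)) = 1/∏_{i=1}^n (1 − x_i), where the sum runs over all proper subsets I of {1,…,n}. (The rational-function identity underlying Proposition 5.1 in the case s = 0, i.e. identity (casozero).) -/

import Mathlib

/-- **Identity (casozero) underlying Proposition 5.1 (case s = 0).**
In a field, if `1 − xᵢ ≠ 0` for all `i` and `1 − ∏ xᵢ ≠ 0`, then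
`Σ_{I ⊊ {1,…,n}} (1/(1 − ∏ xᵢ)) · ∏_{i∈I} (xᵢ/(1 − xᵢ)) = 1/∏ (1 − xᵢ)`. -/
theorem stmt8 {K : Type*} [Field K] (n : ℕ) (hn : 1 ≤ n) (x : Fin n → K)
    (hx : ∀ i, 1 - x i ≠ 0) (hp : 1 - ∏ i, x i ≠ 0) :
    ∑ I ∈ Finset.univ.powerset.erase Finset.univ,
        (1 / (1 - ∏ i, x i)) * ∏ i ∈ I, (x i / (1 - x i)) =
      1 / ∏ i, (1 - x i) := by
  have hP : (∏ i, (1 - x i)) ≠ 0 := Finset.prod_ne_zero_iff.2 fun i _ => hx i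
  have key : ∑ I ∈ Finset.univ.powerset, ∏ i ∈ I, (x i / (1 - x i))
      = ∏ i, (1 / (1 - x i)) := by
    have h := Finset.prod_add (fun i => x i / (1 - x i)) (fun _ => (1 : K)) Finset.univ
    simp only [Finset.prod_const_one, mul_one] at h
    rw [← h]
    refine Finset.prod_congr rfl fun i _ => ?_
    rw [eq_div_iff (hx i), add_mul, div_mul_cancel₀ _ (hx i)]
    ring
  have hsum : ∑ I ∈ Finset.univ.powerset.erase Finset.univ,
      ∏ i ∈ I, (x i / (1 - x i)) = (1 - ∏ i, x i) / ∏ i, (1 - x i) := by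
    have := Finset.sum_erase_add Finset.univ.powerset
      (fun I => ∏ i ∈ I, (x i / (1 - x i))) (Finset.mem_powerset_self _)
    have h2 : ∑ I ∈ Finset.univ.powerset.erase Finset.univ,
        ∏ i ∈ I, (x i / (1 - x i))
        = (∏ i, (1 / (1 - x i))) - ∏ i, (x i / (1 - x i)) := by
      rw [← key]; exact eq_sub_of_add_eq this
    rw [h2, Finset.prod_div_distrib, Finset.prod_div_distrib]
    field_simp
    simp
  rw [← Finset.mul_sum, hsum]
  field_simp
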